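/- Let s > 0 and let μ ∈ W^{1,2}(-s,s) satisfy μ(0) = 1 and |μ| ≤ 1 on (-s,s). Then ∫_{-s}^{s} |μ'| dx ≤ 2s ∫_{-s}^{s} (μ')²/(1 − μ²) dx. -/

import Mathlib

open MeasureTheory Topology Filter

/-- The set of points in `U` where a differentiable function takes value `c` with nonzero
derivative is countable. -/
lemma countable_level_deriv_ne (f f' : ℝ → ℝ) (U : Set ℝ)
    (hf : ∀ x ∈ U, HasDerivAt f (f' x) x) (c : ℝ) :
    {x | x ∈ U ∧ f x = c ∧ f' x ≠ 0}.Countable := by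
  set E : Set ℝ := {x | x ∈ U ∧ f x = c ∧ f' x ≠ 0} with hE
  have hdisc : DiscreteTopology E := by
    rw [discreteTopology_subtype_iff]
    intro x hx
    by_contra h
    have hne : (𝓝[≠] x ⊓ Filter.principal E).NeBot := ⟨h⟩
    obtain ⟨hxU, hfx, hfx'⟩ := hx
    have hslope := hasDerivAt_iff_tendsto_slope.mp (hf x hxU)
    have h1 : Filter.Tendsto (slope f x) (𝓝[≠] x ⊓ Filter.principal E) (𝓝 (f' x)) :=
      hslope.mono_left inf_le_left
    have h2 : Filter.Tendsto (slope f x) (𝓝[≠] x ⊓ Filter.principal E) (𝓝 0) := by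
      have hev : ∀ᶠ y in 𝓝[≠] x ⊓ Filter.principal E, slope f x y = 0 := by
        rw [Filter.eventually_inf_principal]
        filter_upwards with y hy
        have : f y = c := hy.2.1
        simp [slope, this, hfx]
      exact Filter.Tendsto.congr' (by filter_upwards [hev] with y hy using hy.symm)
        tendsto_const_nhds
    exact hfx' (tendsto_nhds_unique h1 h2)
  haveI := hdisc
  have : Countable E := TopologicalSpace.separableSpace_iff_countable.mp inferInstance
  exact Set.countable_coe_iff.mp this

theorem W11_estimate (s : ℝ) (hs : 0 < s) (μ μ' : ℝ → ℝ)
    (hcont : ContinuousOn μ (Set.Icc (-s) s))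
    (hderiv : ∀ x ∈ Set.Ioo (-s) s, HasDerivAt μ (μ' x) x)
    (h0 : μ 0 = 1) (hbound : ∀ x ∈ Set.Ioo (-s) s, |μ x| ≤ 1)
    (hint : IntegrableOn (fun x => (μ' x) ^ 2 / (1 - (μ x) ^ 2)) (Set.Ioo (-s) s)) :
    ∫ x in Set.Ioo (-s) s, |μ' x| ≤
      2 * s * ∫ x in Set.Ioo (-s) s, (μ' x) ^ 2 / (1 - (μ x) ^ 2) := by
  set S : Set ℝ := Set.Ioo (-s) s with hS
  set f : ℝ → ℝ := fun x => (μ' x) ^ 2 / (1 - (μ x) ^ 2) with hf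
  set g : ℝ → ℝ := fun x => 1 - (μ x) ^ 2 with hg
  have hss : -s < s := by linarith
  have h0S : (0 : ℝ) ∈ S := ⟨by linarith, hs⟩
  -- the bad set is null
  have hbad : volume {x | x ∈ S ∧ (μ x) ^ 2 = 1 ∧ μ' x ≠ 0} = 0 := by
    have hsub : {x | x ∈ S ∧ (μ x) ^ 2 = 1 ∧ μ' x ≠ 0} ⊆
        {x | x ∈ S ∧ μ x = 1 ∧ μ' x ≠ 0} ∪ {x | x ∈ S ∧ μ x = -1 ∧ μ' x ≠ 0} := by
      intro x hx
      obtain ⟨hxS, hx1, hx2⟩ := hx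
      have hprod : (μ x - 1) * (μ x + 1) = 0 := by nlinarith
      have : μ x = 1 ∨ μ x = -1 := by
        rcases mul_eq_zero.mp hprod with h | h
        · exact Or.inl (by linarith)
        · exact Or.inr (by linarith)
      rcases this with h | h
      · exact Or.inl ⟨hxS, h, hx2⟩
      · exact Or.inr ⟨hxS, h, hx2⟩
    refine measure_mono_null hsub ?_
    exact ((countable_level_deriv_ne μ μ' S hderiv 1).union
      (countable_level_deriv_ne μ μ' S hderiv (-1))).measure_zero _
  -- a.e. on S, μ x ^ 2 = 1 → μ' x = 0
  have hae0 : ∀ᵐ x ∂(volume.restrict S), (μ x) ^ 2 = 1 → μ' x = 0 := by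
    rw [ae_restrict_iff' measurableSet_Ioo]
    rw [ae_iff]
    refine measure_mono_null ?_ hbad
    intro x hx
    simp only [Set.mem_setOf_eq] at hx ⊢
    push_neg at hx
    obtain ⟨hxS, h1, h2⟩ := hx
    exact ⟨hxS, h1, h2⟩
  have hmemS : ∀ᵐ x ∂(volume.restrict S), x ∈ S :=
    ae_restrict_mem measurableSet_Ioo
  -- basic pointwise facts
  have hg01 : ∀ x ∈ S, 0 ≤ g x ∧ g x ≤ 1 := by
    intro x hx
    have h1 := hbound x hx
    have h2 : (μ x) ^ 2 ≤ 1 := by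
      have := abs_le.mp h1
      nlinarith [this.1, this.2]
    have h3 : 0 ≤ (μ x) ^ 2 := sq_nonneg _
    exact ⟨by simp [hg]; linarith, by simp [hg]; linarith⟩
  -- key a.e. inequality : μ'² ≤ f * g
  have hkey : ∀ᵐ x ∂(volume.restrict S), (μ' x) ^ 2 ≤ f x * g x := by
    filter_upwards [hae0, hmemS] with x h1 h2
    rcases lt_or_eq_of_le (hg01 x h2).1 with hpos | hzero
    · have : f x * g x = (μ' x) ^ 2 := by
        simp only [hf, hg]
        exact div_mul_cancel₀ _ hpos.ne'
      linarith
    · have hgx : g x = 0 := hzero.symm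
      have hμ2 : (μ x) ^ 2 = 1 := by simp only [hg] at hgx; linarith
      have := h1 hμ2
      simp [this, hgx]
  have hf_nonneg : ∀ x ∈ S, 0 ≤ f x := by
    intro x hx
    exact div_nonneg (sq_nonneg _) (hg01 x hx).1
  -- a.e. bound |μ'| ≤ (1 + f)/2, giving integrability
  have habs_le : ∀ᵐ x ∂(volume.restrict S), |μ' x| ≤ (1 + f x) / 2 := by
    filter_upwards [hkey, hmemS] with x h1 h2
    have hg1 := (hg01 x h2).2
    have hg0 := (hg01 x h2).1
    have hf0 := hf_nonneg x h2
    have hsq : (μ' x) ^ 2 ≤ f x := by nlinarith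
    have habs : 0 ≤ |μ' x| := abs_nonneg _
    nlinarith [sq_nonneg (|μ' x| - 1), sq_abs (μ' x)]
  -- measurability of μ' on S
  have hmeas : AEStronglyMeasurable μ' (volume.restrict S) := by
    have : ∀ᵐ x ∂(volume.restrict S), deriv μ x = μ' x := by
      filter_upwards [hmemS] with x hx
      exact (hderiv x hx).deriv
    exact (measurable_deriv μ).aestronglyMeasurable.congr this
  have hbnd_int : IntegrableOn (fun x => (1 + f x) / 2) S :=
    ((integrableOn_const (by simp [hS])).add hint).div_const 2
  have hμ'int : IntegrableOn μ' S := by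
    refine Integrable.mono' hbnd_int hmeas ?_
    filter_upwards [habs_le] with x hx
    simpa using hx
  have hIint : IntegrableOn (fun x => |μ' x|) S := hμ'int.abs
  -- integrals of |μ'| on the two halves
  set Ip : ℝ := ∫ x in Set.Ioo 0 s, |μ' x| with hIp
  set In : ℝ := ∫ x in Set.Ioo (-s) 0, |μ' x| with hIn
  have hsubP : Set.Ioo (0:ℝ) s ⊆ S := Set.Ioo_subset_Ioo (by linarith) le_rfl
  have hsubN : Set.Ioo (-s) (0:ℝ) ⊆ S := Set.Ioo_subset_Ioo le_rfl (by linarith)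
  have hIpInt : IntegrableOn (fun x => |μ' x|) (Set.Ioo 0 s) := hIint.mono_set hsubP
  have hInInt : IntegrableOn (fun x => |μ' x|) (Set.Ioo (-s) 0) := hIint.mono_set hsubN
  -- FTC bounds : 1 - μ x ≤ Ip on (0,s), 1 - μ x ≤ In on (-s,0)
  have hFTCp : ∀ x ∈ Set.Ioo (0:ℝ) s, 1 - μ x ≤ Ip := by
    intro x hx
    obtain ⟨hx0, hxs⟩ := hx
    have hIcc : Set.Icc (0:ℝ) x ⊆ Set.Icc (-s) s :=
      Set.Icc_subset_Icc (by linarith) (by linarith)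
    have hIoc : Set.Ioc (0:ℝ) x ⊆ Set.Ioo 0 s := fun t ht => ⟨ht.1, lt_of_le_of_lt ht.2 hxs⟩
    have hIocS : Set.Ioc (0:ℝ) x ⊆ S := hIoc.trans hsubP
    have hii : IntervalIntegrable μ' volume 0 x := by
      rw [intervalIntegrable_iff_integrableOn_Ioc_of_le hx0.le]
      exact hμ'int.mono_set hIocS
    have hftc : ∫ t in (0:ℝ)..x, μ' t = μ x - μ 0 := by
      refine intervalIntegral.integral_eq_sub_of_hasDeriv_right_of_le hx0.le
        (hcont.mono hIcc) ?_ hii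
      intro t ht
      have htS : t ∈ S := ⟨by linarith [ht.1], lt_trans ht.2 hxs⟩
      exact (hderiv t htS).hasDerivWithinAt
    have habs : |∫ t in (0:ℝ)..x, μ' t| ≤ ∫ t in (0:ℝ)..x, |μ' t| :=
      intervalIntegral.abs_integral_le_integral_abs hx0.le
    have hmono : ∫ t in (0:ℝ)..x, |μ' t| ≤ Ip := by
      rw [intervalIntegral.integral_of_le hx0.le]
      rw [hIp]
      refine setIntegral_mono_set hIpInt ?_ (Filter.Eventually.of_forall hIoc)
      filter_upwards with t using abs_nonneg _
    have : 1 - μ x = -(∫ t in (0:ℝ)..x, μ' t) := by rw [hftc, h0]; ring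
    calc 1 - μ x = -(∫ t in (0:ℝ)..x, μ' t) := this
      _ ≤ |∫ t in (0:ℝ)..x, μ' t| := neg_le_abs _
      _ ≤ ∫ t in (0:ℝ)..x, |μ' t| := habs
      _ ≤ Ip := hmono
  have hFTCn : ∀ x ∈ Set.Ioo (-s) (0:ℝ), 1 - μ x ≤ In := by
    intro x hx
    obtain ⟨hxs, hx0⟩ := hx
    have hIcc : Set.Icc x (0:ℝ) ⊆ Set.Icc (-s) s :=
      Set.Icc_subset_Icc (by linarith) (by linarith)
    have hIoc : Set.Ioc x (0:ℝ) ⊆ Set.Ioc (-s) 0 := fun t ht => ⟨lt_trans hxs ht.1, ht.2⟩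
    have hIooN : Set.Ioo x (0:ℝ) ⊆ Set.Ioo (-s) 0 := fun t ht => ⟨lt_trans hxs ht.1, ht.2⟩
    have hii : IntervalIntegrable μ' volume x 0 := by
      rw [intervalIntegrable_iff_integrableOn_Ioc_of_le hx0.le]
      refine (hμ'int.mono_set ?_)
      intro t ht
      exact ⟨lt_trans hxs ht.1, lt_of_le_of_lt ht.2 hs⟩
    have hftc : ∫ t in x..(0:ℝ), μ' t = μ 0 - μ x := by
      refine intervalIntegral.integral_eq_sub_of_hasDeriv_right_of_le hx0.le
        (hcont.mono hIcc) ?_ hii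
      intro t ht
      have htS : t ∈ S := ⟨lt_trans hxs ht.1, lt_trans ht.2 hs⟩
      exact (hderiv t htS).hasDerivWithinAt
    have habs : |∫ t in x..(0:ℝ), μ' t| ≤ ∫ t in x..(0:ℝ), |μ' t| :=
      intervalIntegral.abs_integral_le_integral_abs hx0.le
    have hmono : ∫ t in x..(0:ℝ), |μ' t| ≤ In := by
      rw [intervalIntegral.integral_of_le hx0.le]
      rw [hIn, ← integral_Ioc_eq_integral_Ioo]
      refine setIntegral_mono_set ((hIint.mono_set hsubN).congr_set_ae
        Ioo_ae_eq_Ioc.symm) ?_ (Filter.Eventually.of_forall hIoc)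
      filter_upwards with t using abs_nonneg _
    calc 1 - μ x = μ 0 - μ x := by rw [h0]
      _ = ∫ t in x..(0:ℝ), μ' t := hftc.symm
      _ ≤ |∫ t in x..(0:ℝ), μ' t| := le_abs_self _
      _ ≤ ∫ t in x..(0:ℝ), |μ' t| := habs
      _ ≤ In := hmono
  -- Ip, In nonneg
  have hIp0 : 0 ≤ Ip := setIntegral_nonneg measurableSet_Ioo (fun x _ => abs_nonneg _)
  have hIn0 : 0 ≤ In := setIntegral_nonneg measurableSet_Ioo (fun x _ => abs_nonneg _)
  -- g is integrable on S (continuous on Icc)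
  have hgint : IntegrableOn g S := by
    have hc : ContinuousOn g (Set.Icc (-s) s) := by
      exact (continuousOn_const.sub ((hcont.pow 2)))
    exact (hc.integrableOn_compact isCompact_Icc).mono_set Set.Ioo_subset_Icc_self
  -- bound ∫_S g ≤ 2 s (In + Ip)
  have hvol : (volume (Set.Ioo (0:ℝ) s)).toReal = s := by
    rw [Real.volume_Ioo, ENNReal.toReal_ofReal (by linarith)]; ring
  have hvolN : (volume (Set.Ioo (-s) (0:ℝ))).toReal = s := by
    rw [Real.volume_Ioo, ENNReal.toReal_ofReal (by linarith)]; ring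
  have hGp : ∫ x in Set.Ioo (0:ℝ) s, g x ≤ s * (2 * Ip) := by
    have h1 : ∫ x in Set.Ioo (0:ℝ) s, g x ≤ ∫ _x in Set.Ioo (0:ℝ) s, 2 * Ip := by
      refine setIntegral_mono_on (hgint.mono_set hsubP)
        (integrableOn_const (by simp)) measurableSet_Ioo ?_
      intro x hx
      have h1 := hFTCp x hx
      have h2 := hbound x (hsubP hx)
      have := abs_le.mp h2
      simp only [hg]
      nlinarith [this.1, this.2]
    rw [setIntegral_const] at h1
    rw [measureReal_def, hvol] at h1
    simpa using h1
  have hGn : ∫ x in Set.Ioo (-s) (0:ℝ), g x ≤ s * (2 * In) := by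
    have h1 : ∫ x in Set.Ioo (-s) (0:ℝ), g x ≤ ∫ _x in Set.Ioo (-s) (0:ℝ), 2 * In := by
      refine setIntegral_mono_on (hgint.mono_set hsubN)
        (integrableOn_const (by simp)) measurableSet_Ioo ?_
      intro x hx
      have h1 := hFTCn x hx
      have h2 := hbound x (hsubN hx)
      have := abs_le.mp h2
      simp only [hg]
      nlinarith [this.1, this.2]
    rw [setIntegral_const] at h1
    rw [measureReal_def, hvolN] at h1
    simpa using h1
  -- splitting integrals over S
  have hsplit : ∀ (φ : ℝ → ℝ), IntegrableOn φ S →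
      ∫ x in S, φ x = (∫ x in Set.Ioo (-s) 0, φ x) + ∫ x in Set.Ioo 0 s, φ x := by
    intro φ hφ
    have hU : Set.Ioo (-s) (0:ℝ) ∪ Set.Ico (0:ℝ) s = S := by
      rw [hS]
      exact Set.Ioo_union_Ico_eq_Ioo (by linarith) hs.le
    have hdisj : Disjoint (Set.Ioo (-s) (0:ℝ)) (Set.Ico (0:ℝ) s) := by
      refine Set.disjoint_left.mpr ?_
      intro t ht ht'
      exact absurd ht.2 (not_lt.mpr ht'.1)
    have hIco : Set.Ico (0:ℝ) s ⊆ S := fun t ht => ⟨by linarith [ht.1], ht.2⟩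
    calc ∫ x in S, φ x = ∫ x in Set.Ioo (-s) 0 ∪ Set.Ico 0 s, φ x := by rw [hU]
      _ = (∫ x in Set.Ioo (-s) 0, φ x) + ∫ x in Set.Ico 0 s, φ x :=
          setIntegral_union hdisj measurableSet_Ico (hφ.mono_set hsubN) (hφ.mono_set hIco)
      _ = (∫ x in Set.Ioo (-s) 0, φ x) + ∫ x in Set.Ioo 0 s, φ x := by
          rw [integral_Ico_eq_integral_Ioo]
  have hIsplit : ∫ x in S, |μ' x| = In + Ip := hsplit _ hIint
  have hGsplit : ∫ x in S, g x ≤ 2 * s * (In + Ip) := by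
    rw [hsplit g hgint]
    nlinarith [hGp, hGn]
  -- pointwise a.e. : |μ'| ≤ s * f + g / (4 s)
  have hptwise : ∀ᵐ x ∂(volume.restrict S), |μ' x| ≤ s * f x + g x / (4 * s) := by
    filter_upwards [hkey, hmemS] with x h1 h2
    have hg0 := (hg01 x h2).1
    have hf0 := hf_nonneg x h2
    have habs : 0 ≤ |μ' x| := abs_nonneg _
    have hsq : |μ' x| ^ 2 ≤ f x * g x := by rw [sq_abs]; exact h1
    have h4s : (0:ℝ) < 4 * s := by linarith
    have hsq2 : (4 * s * |μ' x|) ^ 2 ≤ (4 * s ^ 2 * f x + g x) ^ 2 := by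
      nlinarith [mul_le_mul_of_nonneg_left hsq (by positivity : (0:ℝ) ≤ 16 * s ^ 2),
        sq_nonneg (4 * s ^ 2 * f x - g x)]
    have key : 4 * s * |μ' x| ≤ 4 * s ^ 2 * f x + g x :=
      le_of_abs_le (abs_le_of_sq_le_sq hsq2 (by positivity))
    have hdiv : |μ' x| ≤ (4 * s ^ 2 * f x + g x) / (4 * s) := by
      rw [le_div_iff₀ h4s]; linarith [key]
    have heqd : (4 * s ^ 2 * f x + g x) / (4 * s) = s * f x + g x / (4 * s) := by
      field_simp
    linarith [hdiv, heqd.le, heqd.ge]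
  -- integrate
  have hrhs_int : IntegrableOn (fun x => s * f x + g x / (4 * s)) S :=
    (hint.const_mul s).add (hgint.div_const (4 * s))
  have hmain : ∫ x in S, |μ' x| ≤ ∫ x in S, (s * f x + g x / (4 * s)) :=
    integral_mono_ae hIint hrhs_int hptwise
  have heq : ∫ x in S, (s * f x + g x / (4 * s)) =
      s * (∫ x in S, f x) + (∫ x in S, g x) / (4 * s) := by
    rw [integral_add (hint.const_mul s) (hgint.div_const (4 * s)),
      integral_const_mul, integral_div]
  have hF0 : 0 ≤ ∫ x in S, f x := setIntegral_nonneg measurableSet_Ioo hf_nonneg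
  rw [hIsplit] at hmain
  rw [heq] at hmain
  have hgs : (∫ x in S, g x) / (4 * s) ≤ (In + Ip) / 2 := by
    rw [div_le_iff₀ (by positivity)]
    calc ∫ x in S, g x ≤ 2 * s * (In + Ip) := hGsplit
      _ = (In + Ip) / 2 * (4 * s) := by ring
  have hfinal : In + Ip ≤ 2 * s * ∫ x in S, f x := by
    have := hmain.trans (by linarith : s * (∫ x in S, f x) + (∫ x in S, g x) / (4 * s)
      ≤ s * (∫ x in S, f x) + (In + Ip) / 2)
    linarith
  rw [show (∫ x in Set.Ioo (-s) s, |μ' x|) = In + Ip from hIsplit]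
  exact hfinal
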